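/- Let ν > 0 and α > 0 be real, let k be a nonzero integer, let s ∈ ℂ with Re(s) > 0, and let z^(1/2) denote the principal branch of the complex square root. Then (α + s) · ( |k| · ((νk² + s)/ν)^(1/2) − k² ) · ((νk² + α + s)/ν)^(1/2) ≠ 0. -/

import Mathlib

open Complex

/-- Nonvanishing of the limiting boundary determinant for Re(s) > 0. -/
theorem stmt_16 (ν α : ℝ) (hν : 0 < ν) (hα : 0 < α)
    (k : ℤ) (hk : k ≠ 0) (s : ℂ) (hs : 0 < s.re) :
    ((α : ℂ) + s)
      * (((|k| : ℤ) : ℂ) * (((ν : ℂ) * (k : ℂ) ^ 2 + s) / (ν : ℂ)) ^ ((1 : ℂ) / 2)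
        - (k : ℂ) ^ 2)
      * ((((ν : ℂ) * (k : ℂ) ^ 2 + (α : ℂ) + s) / (ν : ℂ)) ^ ((1 : ℂ) / 2)) ≠ 0 := by
  have hν0 : (ν : ℂ) ≠ 0 := by exact_mod_cast hν.ne'
  have hkC : (k : ℂ) ≠ 0 := Int.cast_ne_zero.mpr hk
  have hk2 : ((k : ℂ)) ^ 2 ≠ 0 := pow_ne_zero _ hkC
  have hkk : ((|k| : ℤ) : ℂ) ^ 2 = (k : ℂ) ^ 2 := by
    norm_cast
    exact sq_abs k
  -- first factor
  have h1 : (α : ℂ) + s ≠ 0 := by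
    intro h
    have := congrArg Complex.re h
    simp at this
    linarith
  -- second factor
  have h2 : ((|k| : ℤ) : ℂ) * (((ν : ℂ) * (k : ℂ) ^ 2 + s) / (ν : ℂ)) ^ ((1 : ℂ) / 2)
      - (k : ℂ) ^ 2 ≠ 0 := by
    intro h
    have heq : ((|k| : ℤ) : ℂ) * (((ν : ℂ) * (k : ℂ) ^ 2 + s) / (ν : ℂ)) ^ ((1 : ℂ) / 2)
        = (k : ℂ) ^ 2 := by linear_combination h
    have hsq := congrArg (· ^ 2) heq
    simp only [mul_pow] at hsq
    have hpow : ((((ν : ℂ) * (k : ℂ) ^ 2 + s) / (ν : ℂ)) ^ ((1 : ℂ) / 2)) ^ 2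
        = ((ν : ℂ) * (k : ℂ) ^ 2 + s) / (ν : ℂ) := by
      have := Complex.cpow_nat_inv_pow (((ν : ℂ) * (k : ℂ) ^ 2 + s) / (ν : ℂ))
        (n := 2) (by norm_num)
      simpa [one_div] using this
    rw [hpow, hkk] at hsq
    -- hsq : k^2 * ((ν k^2 + s)/ν) = (k^2)^2
    field_simp at hsq
    have hks : (k : ℂ) ^ 2 * s = 0 := by linear_combination (k : ℂ) ^ 2 * hsq
    have hs0 : s = 0 := (mul_eq_zero.mp hks).resolve_left hk2
    rw [hs0] at hs
    simp at hs
  -- third factor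
  have h3 : (((ν : ℂ) * (k : ℂ) ^ 2 + (α : ℂ) + s) / (ν : ℂ)) ^ ((1 : ℂ) / 2) ≠ 0 := by
    have hbase : ((ν : ℂ) * (k : ℂ) ^ 2 + (α : ℂ) + s) / (ν : ℂ) ≠ 0 := by
      rw [div_ne_zero_iff]
      refine ⟨fun h => ?_, hν0⟩
      have hrw : (ν : ℂ) * (k : ℂ) ^ 2 + (α : ℂ) + s = ((ν * (k:ℝ)^2 + α : ℝ) : ℂ) + s := by
        push_cast; ring
      rw [hrw] at h
      have := congrArg Complex.re h
      have hkr : (0:ℝ) < (k:ℝ)^2 := by positivity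
      rw [Complex.add_re, Complex.ofReal_re, Complex.zero_re] at this
      nlinarith
    simp [Complex.cpow_eq_zero_iff, hbase]
  exact mul_ne_zero (mul_ne_zero h1 h2) h3
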